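/- Let τ>0, γ∈ℝ, 0<a≤b, B_max>0, and c_τ>0. Then there exists a constant C>0, depending only on τ, a, b, γ, B_max and c_τ (and in particular not on the trajectories), with the following property. Let B:[0,τ]→ℝ³ be integrable with ‖B(t)‖≤B_max for all t, let θ=(T₁,T₂) and θᵟ=(T₁ᵟ,T₂ᵟ) lie in [a,b]², and let m, mᵟ : [0,τ]→ℝ³ be differentiable with integrable derivatives, satisfying the Bloch equation with parameters Θ(θ) and Θ(θᵟ) respectively, such that every component of ∫₀^τ m(t) dt − τ·m_e and of ∫₀^τ mᵟ(t) dt − τ·m_e has absolute value at least c_τ. Then ‖θ − θᵟ‖ ≤ C ( ∫₀^τ ‖m(t) − mᵟ(t)‖ dt + ∫₀^τ ‖m′(t) − (mᵟ)′(t)‖ dt ). In particular, if the right-hand bracket is at most δ then ‖θ − θᵟ‖ ≤ C δ with C independent of δ. -/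

import Mathlib

open MeasureTheory

/-- The equilibrium magnetization `m_e = (0,0,1)`. -/
noncomputable def me : Fin 3 → ℝ := ![0, 0, 1]

/-- The relaxation vector `Θ = (1/T₂, 1/T₂, 1/T₁)` associated with `θ = (T₁,T₂)`. -/
noncomputable def relax (θ : ℝ × ℝ) : Fin 3 → ℝ := ![1 / θ.2, 1 / θ.2, 1 / θ.1]

/-- The Euclidean norm on `ℝ³`. -/
noncomputable def enorm3 (v : Fin 3 → ℝ) : ℝ := Real.sqrt (∑ i, v i ^ 2)

/-- The Euclidean norm on `ℝ²`. -/
noncomputable def enorm2 (v : ℝ × ℝ) : ℝ := Real.sqrt (v.1 ^ 2 + v.2 ^ 2)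

lemma enorm3_nonneg (v : Fin 3 → ℝ) : 0 ≤ enorm3 v := Real.sqrt_nonneg _

lemma abs_apply_le_enorm3 (v : Fin 3 → ℝ) (i : Fin 3) : |v i| ≤ enorm3 v := by
  rw [enorm3, ← Real.sqrt_sq_eq_abs]
  exact Real.sqrt_le_sqrt (Finset.single_le_sum (f := fun j => v j ^ 2)
    (fun j _ => sq_nonneg _) (Finset.mem_univ i))

lemma enorm3_le_sum_abs (v : Fin 3 → ℝ) : enorm3 v ≤ ∑ i, |v i| := by
  rw [enorm3]
  have h : ∑ i, v i ^ 2 ≤ (∑ i, |v i|) ^ 2 := by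
    simp only [Fin.sum_univ_three]
    nlinarith [mul_nonneg (abs_nonneg (v 0)) (abs_nonneg (v 1)),
      mul_nonneg (abs_nonneg (v 0)) (abs_nonneg (v 2)),
      mul_nonneg (abs_nonneg (v 1)) (abs_nonneg (v 2)),
      sq_abs (v 0), sq_abs (v 1), sq_abs (v 2)]
  calc Real.sqrt (∑ i, v i ^ 2) ≤ Real.sqrt ((∑ i, |v i|) ^ 2) := Real.sqrt_le_sqrt h
    _ = ∑ i, |v i| := Real.sqrt_sq (by positivity)

lemma enorm2_le_abs (v : ℝ × ℝ) : enorm2 v ≤ |v.1| + |v.2| := by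
  rw [enorm2]
  have h : v.1 ^ 2 + v.2 ^ 2 ≤ (|v.1| + |v.2|) ^ 2 := by
    nlinarith [mul_nonneg (abs_nonneg v.1) (abs_nonneg v.2), sq_abs v.1, sq_abs v.2]
  calc Real.sqrt (v.1 ^ 2 + v.2 ^ 2) ≤ Real.sqrt ((|v.1| + |v.2|) ^ 2) := Real.sqrt_le_sqrt h
    _ = |v.1| + |v.2| := Real.sqrt_sq (by positivity)

lemma continuous_enorm3 : Continuous enorm3 := by
  unfold enorm3
  exact Real.continuous_sqrt.comp (continuous_finset_sum _ fun i _ => (continuous_apply i).pow 2)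

lemma intervalIntegrable_enorm3 {g : ℝ → Fin 3 → ℝ} {a b : ℝ}
    (h : ∀ i, IntervalIntegrable (fun t => g t i) volume a b) :
    IntervalIntegrable (fun t => enorm3 (g t)) volume a b := by
  have hsum : IntervalIntegrable (fun t => ∑ i : Fin 3, |g t i|) volume a b := by
    have := IntervalIntegrable.sum (μ := volume) (a := a) (b := b) Finset.univ
      (f := fun i t => |g t i|) (fun i _ => (h i).abs)
    simpa [Finset.sum_fn] using this
  refine hsum.mono_fun' ?_ ?_
  · have hm : ∀ i : Fin 3, AEMeasurable (fun t => g t i) (volume.restrict (Set.uIoc a b)) :=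
      fun i => (intervalIntegrable_iff.1 (h i)).aestronglyMeasurable.aemeasurable
    have hs : AEMeasurable (fun t => ∑ i : Fin 3, g t i ^ 2) (volume.restrict (Set.uIoc a b)) :=
      Finset.aemeasurable_fun_sum _ fun i _ => (hm i).pow_const 2
    exact (Real.continuous_sqrt.measurable.comp_aemeasurable hs).aestronglyMeasurable
  · refine Filter.Eventually.of_forall fun t => ?_
    simp only [Real.norm_eq_abs, abs_of_nonneg (enorm3_nonneg (g t))]
    exact enorm3_le_sum_abs _

lemma crossInt {τ γ : ℝ} (hτ : 0 < τ) {B m : ℝ → Fin 3 → ℝ}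
    (hBint : ∀ i, IntervalIntegrable (fun t => B t i) volume 0 τ)
    (hmc : ContinuousOn m (Set.Icc 0 τ)) (i : Fin 3) :
    IntervalIntegrable (fun t => crossProduct (m t) (γ • B t) i) volume 0 τ := by
  have hmci : ∀ j : Fin 3, ContinuousOn (fun t => m t j) (Set.uIcc 0 τ) := by
    rw [Set.uIcc_of_le hτ.le]
    exact fun j => (continuous_apply j).comp_continuousOn hmc
  have hBγ : ∀ j : Fin 3, IntervalIntegrable (fun t => γ * B t j) volume 0 τ :=
    fun j => (hBint j).const_mul γ
  fin_cases i <;>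
    simp only [cross_apply, Pi.smul_apply, smul_eq_mul, Matrix.cons_val_zero,
      Matrix.cons_val_one, Matrix.head_cons, Matrix.cons_val_two, Matrix.tail_cons] <;>
    exact ((hBγ _).continuousOn_mul (hmci _)).sub ((hBγ _).continuousOn_mul (hmci _))

lemma bloch_integral {τ γ : ℝ} (hτ : 0 < τ) {B m m' : ℝ → Fin 3 → ℝ}
    (hBint : ∀ i, IntervalIntegrable (fun t => B t i) volume 0 τ)
    (hm : ∀ t ∈ Set.Icc (0:ℝ) τ, HasDerivAt m (m' t) t)
    {Θ : Fin 3 → ℝ}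
    (heq : ∀ t ∈ Set.Ioo (0:ℝ) τ,
      m' t = crossProduct (m t) (γ • B t) - fun i => Θ i * (m t i - me i))
    (i : Fin 3) :
    Θ i * ((∫ t in (0:ℝ)..τ, m t i) - τ * me i)
      = (∫ t in (0:ℝ)..τ, crossProduct (m t) (γ • B t) i) - ∫ t in (0:ℝ)..τ, m' t i := by
  have hmc : ContinuousOn m (Set.Icc 0 τ) :=
    fun t ht => ((hm t ht).continuousAt.continuousWithinAt)
  have hmci : ContinuousOn (fun t => m t i) (Set.uIcc 0 τ) := by
    rw [Set.uIcc_of_le hτ.le]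
    exact (continuous_apply i).comp_continuousOn hmc
  have hmint : IntervalIntegrable (fun t => m t i) volume 0 τ := hmci.intervalIntegrable
  have hcross := crossInt (γ := γ) hτ hBint hmc i
  have hlin : IntervalIntegrable (fun t => Θ i * (m t i - me i)) volume 0 τ :=
    ((hmci.sub continuousOn_const).intervalIntegrable).const_mul (Θ i)
  have key : (∫ t in (0:ℝ)..τ, m' t i)
      = ∫ t in (0:ℝ)..τ, (crossProduct (m t) (γ • B t) i - Θ i * (m t i - me i)) := by
    apply intervalIntegral.integral_congr_ae
    have hne : ∀ᵐ (t : ℝ), t ≠ τ := by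
      have h1 : volume ({τ} : Set ℝ) = 0 := measure_singleton τ
      exact (measure_eq_zero_iff_ae_notMem.mp h1).mono fun t ht => ht
    filter_upwards [hne] with t htne hmem
    have ht : t ∈ Set.Ioo (0:ℝ) τ := by
      rw [Set.uIoc_of_le hτ.le] at hmem
      exact ⟨hmem.1, lt_of_le_of_ne hmem.2 htne⟩
    rw [heq t ht]
    simp [Pi.sub_apply]
  rw [intervalIntegral.integral_sub hcross hlin,
    intervalIntegral.integral_const_mul,
    intervalIntegral.integral_sub hmint intervalIntegrable_const,
    intervalIntegral.integral_const] at key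
  simp only [smul_eq_mul, sub_zero] at key
  linarith [key]

lemma aux_bound {x1 x2 y1 y2 w1 w2 γ Bmax E : ℝ}
    (h1 : |x1 - y1| ≤ E) (h2 : |x2 - y2| ≤ E) (hw1 : |w1| ≤ Bmax) (hw2 : |w2| ≤ Bmax)
    (hE : 0 ≤ E) :
    |x1 * (γ * w2) - x2 * (γ * w1) - (y1 * (γ * w2) - y2 * (γ * w1))|
      ≤ 2 * |γ| * Bmax * E := by
  have hB0 : 0 ≤ Bmax := le_trans (abs_nonneg _) hw1
  have e : x1 * (γ * w2) - x2 * (γ * w1) - (y1 * (γ * w2) - y2 * (γ * w1))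
      = (x1 - y1) * (γ * w2) - (x2 - y2) * (γ * w1) := by ring
  rw [e]
  calc |(x1 - y1) * (γ * w2) - (x2 - y2) * (γ * w1)|
      ≤ |(x1 - y1) * (γ * w2)| + |(x2 - y2) * (γ * w1)| := abs_sub _ _
    _ ≤ E * (|γ| * Bmax) + E * (|γ| * Bmax) := by
        gcongr
        · rw [abs_mul, abs_mul]
          exact mul_le_mul h1 (mul_le_mul_of_nonneg_left hw2 (abs_nonneg γ))
            (by positivity) hE
        · rw [abs_mul, abs_mul]
          exact mul_le_mul h2 (mul_le_mul_of_nonneg_left hw1 (abs_nonneg γ))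
            (by positivity) hE
    _ = 2 * |γ| * Bmax * E := by ring

lemma cross_diff_bound (v vδ w : Fin 3 → ℝ) {γ Bmax : ℝ} (hw : enorm3 w ≤ Bmax) (i : Fin 3) :
    |crossProduct v (γ • w) i - crossProduct vδ (γ • w) i|
      ≤ 2 * |γ| * Bmax * enorm3 (v - vδ) := by
  have hB : ∀ k, |w k| ≤ Bmax := fun k => (abs_apply_le_enorm3 w k).trans hw
  have hd : ∀ k, |v k - vδ k| ≤ enorm3 (v - vδ) := fun k => by
    simpa using abs_apply_le_enorm3 (v - vδ) k
  have h0 : 0 ≤ enorm3 (v - vδ) := enorm3_nonneg _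
  fin_cases i <;>
    simp only [cross_apply, Pi.smul_apply, smul_eq_mul, Matrix.cons_val_zero,
      Matrix.cons_val_one, Matrix.head_cons, Matrix.cons_val_two, Matrix.tail_cons] <;>
    exact aux_bound (hd _) (hd _) (hB _) (hB _) h0

/-- Stability of the inversion of the Bloch mapping: under the nondegeneracy condition
there is a constant `C` (depending only on `τ, a, b, γ, Bmax, cτ`, not on the trajectories)
such that `‖θ − θᵟ‖ ≤ C (∫₀^τ ‖m − mᵟ‖ + ∫₀^τ ‖m' − (mᵟ)'‖)`. -/
theorem stmt3 (τ : ℝ) (hτ : 0 < τ) (γ a b Bmax cτ : ℝ)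
    (ha : 0 < a) (hab : a ≤ b) (hBmax : 0 < Bmax) (hcτ : 0 < cτ) :
    ∃ C > 0, ∀ (B : ℝ → Fin 3 → ℝ),
      (∀ i, IntervalIntegrable (fun t => B t i) volume 0 τ) →
      (∀ t, enorm3 (B t) ≤ Bmax) →
      ∀ (θ θδ : ℝ × ℝ),
        θ.1 ∈ Set.Icc a b → θ.2 ∈ Set.Icc a b →
        θδ.1 ∈ Set.Icc a b → θδ.2 ∈ Set.Icc a b →
      ∀ (m m' mδ mδ' : ℝ → Fin 3 → ℝ),
        (∀ t ∈ Set.Icc (0:ℝ) τ, HasDerivAt m (m' t) t) →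
        (∀ i, IntervalIntegrable (fun t => m' t i) volume 0 τ) →
        (∀ t ∈ Set.Ioo (0:ℝ) τ,
          m' t = crossProduct (m t) (γ • B t) - fun i => relax θ i * (m t i - me i)) →
        (∀ t ∈ Set.Icc (0:ℝ) τ, HasDerivAt mδ (mδ' t) t) →
        (∀ i, IntervalIntegrable (fun t => mδ' t i) volume 0 τ) →
        (∀ t ∈ Set.Ioo (0:ℝ) τ,
          mδ' t = crossProduct (mδ t) (γ • B t) - fun i => relax θδ i * (mδ t i - me i)) →
        (∀ i : Fin 3, cτ ≤ |(∫ t in (0:ℝ)..τ, m t i) - τ * me i|) →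
        (∀ i : Fin 3, cτ ≤ |(∫ t in (0:ℝ)..τ, mδ t i) - τ * me i|) →
        enorm2 (θ - θδ)
          ≤ C * ((∫ t in (0:ℝ)..τ, enorm3 (m t - mδ t))
                 + ∫ t in (0:ℝ)..τ, enorm3 (m' t - mδ' t)) := by
  have hb : 0 < b := lt_of_lt_of_le ha hab
  set K : ℝ := (2 * |γ| * Bmax + 1 / a + 1) / cτ with hKdef
  have hK0 : 0 < K := by
    apply div_pos _ hcτ
    have h1 : 0 ≤ 2 * |γ| * Bmax := mul_nonneg (by positivity) hBmax.le
    have h2 : 0 < 1 / a := by positivity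
    linarith
  refine ⟨2 * b ^ 2 * K, by positivity, ?_⟩
  intro B hBint hBle θ θδ hθ1 hθ2 hθδ1 hθδ2 m m' mδ mδ' hm hm'int hmeq hmδ hmδ'int hmδeq hc hcδ
  set X := ∫ t in (0:ℝ)..τ, enorm3 (m t - mδ t) with hXdef
  set Y := ∫ t in (0:ℝ)..τ, enorm3 (m' t - mδ' t) with hYdef
  have hmc : ContinuousOn m (Set.Icc 0 τ) :=
    fun t ht => ((hm t ht).continuousAt.continuousWithinAt)
  have hmδc : ContinuousOn mδ (Set.Icc 0 τ) :=
    fun t ht => ((hmδ t ht).continuousAt.continuousWithinAt)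
  have hmci : ∀ j : Fin 3, IntervalIntegrable (fun t => m t j) volume 0 τ := by
    intro j
    apply ContinuousOn.intervalIntegrable
    rw [Set.uIcc_of_le hτ.le]
    exact (continuous_apply j).comp_continuousOn hmc
  have hmδci : ∀ j : Fin 3, IntervalIntegrable (fun t => mδ t j) volume 0 τ := by
    intro j
    apply ContinuousOn.intervalIntegrable
    rw [Set.uIcc_of_le hτ.le]
    exact (continuous_apply j).comp_continuousOn hmδc
  have hXint : IntervalIntegrable (fun t => enorm3 (m t - mδ t)) volume 0 τ := by
    apply ContinuousOn.intervalIntegrable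
    rw [Set.uIcc_of_le hτ.le]
    exact continuous_enorm3.comp_continuousOn (hmc.sub hmδc)
  have hYint : IntervalIntegrable (fun t => enorm3 (m' t - mδ' t)) volume 0 τ :=
    intervalIntegrable_enorm3 (fun i => (hm'int i).sub (hmδ'int i))
  have hX0 : 0 ≤ X := intervalIntegral.integral_nonneg hτ.le fun t _ => enorm3_nonneg _
  have hY0 : 0 ≤ Y := intervalIntegral.integral_nonneg hτ.le fun t _ => enorm3_nonneg _
  have hcross : ∀ i, IntervalIntegrable
      (fun t => crossProduct (m t) (γ • B t) i) volume 0 τ := crossInt hτ hBint hmc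
  have hcrossδ : ∀ i, IntervalIntegrable
      (fun t => crossProduct (mδ t) (γ • B t) i) volume 0 τ := crossInt hτ hBint hmδc
  have hkey := fun i => bloch_integral hτ hBint hm hmeq i
  have hkeyδ := fun i => bloch_integral hτ hBint hmδ hmδeq i
  have hθδ1pos : 0 < θδ.1 := lt_of_lt_of_le ha hθδ1.1
  have hθδ2pos : 0 < θδ.2 := lt_of_lt_of_le ha hθδ2.1
  have hθ1pos : 0 < θ.1 := lt_of_lt_of_le ha hθ1.1
  have hθ2pos : 0 < θ.2 := lt_of_lt_of_le ha hθ2.1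
  have hrel : ∀ i : Fin 3, 0 ≤ relax θδ i ∧ relax θδ i ≤ 1 / a := by
    intro i
    fin_cases i <;>
      simp only [relax, Matrix.cons_val_zero, Matrix.cons_val_one, Matrix.head_cons,
        Matrix.cons_val_two, Matrix.tail_cons] <;>
      exact ⟨by first | exact (one_div_pos.mpr hθδ2pos).le | exact (one_div_pos.mpr hθδ1pos).le,
        one_div_le_one_div_of_le ha (by first | exact hθδ2.1 | exact hθδ1.1)⟩
  have main : ∀ i : Fin 3, |relax θ i - relax θδ i| ≤ K * (X + Y) := by
    intro i
    set N := ∫ t in (0:ℝ)..τ, crossProduct (m t) (γ • B t) i with hN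
    set Nδ := ∫ t in (0:ℝ)..τ, crossProduct (mδ t) (γ • B t) i with hNδ
    set P := ∫ t in (0:ℝ)..τ, m' t i with hP
    set Pδ := ∫ t in (0:ℝ)..τ, mδ' t i with hPδ
    set D := (∫ t in (0:ℝ)..τ, m t i) - τ * me i with hD
    set Dδ := (∫ t in (0:ℝ)..τ, mδ t i) - τ * me i with hDδ
    have hNd : |N - Nδ| ≤ 2 * |γ| * Bmax * X := by
      rw [hN, hNδ, ← intervalIntegral.integral_sub (hcross i) (hcrossδ i)]
      calc |∫ t in (0:ℝ)..τ, (crossProduct (m t) (γ • B t) i - crossProduct (mδ t) (γ • B t) i)|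
          ≤ ∫ t in (0:ℝ)..τ, |crossProduct (m t) (γ • B t) i - crossProduct (mδ t) (γ • B t) i| :=
            intervalIntegral.abs_integral_le_integral_abs hτ.le
        _ ≤ ∫ t in (0:ℝ)..τ, 2 * |γ| * Bmax * enorm3 (m t - mδ t) :=
            intervalIntegral.integral_mono_on hτ.le ((hcross i).sub (hcrossδ i)).abs
              (hXint.const_mul _) (fun t _ => cross_diff_bound (m t) (mδ t) (B t) (hBle t) i)
        _ = 2 * |γ| * Bmax * X := intervalIntegral.integral_const_mul _ _
    have hPd : |P - Pδ| ≤ Y := by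
      rw [hP, hPδ, ← intervalIntegral.integral_sub (hm'int i) (hmδ'int i)]
      calc |∫ t in (0:ℝ)..τ, (m' t i - mδ' t i)|
          ≤ ∫ t in (0:ℝ)..τ, |m' t i - mδ' t i| :=
            intervalIntegral.abs_integral_le_integral_abs hτ.le
        _ ≤ Y := intervalIntegral.integral_mono_on hτ.le ((hm'int i).sub (hmδ'int i)).abs
            hYint (fun t _ => by simpa using abs_apply_le_enorm3 (m' t - mδ' t) i)
    have hDd : |D - Dδ| ≤ X := by
      have e : D - Dδ = ∫ t in (0:ℝ)..τ, (m t i - mδ t i) := by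
        rw [hD, hDδ, intervalIntegral.integral_sub (hmci i) (hmδci i)]
        ring
      rw [e]
      calc |∫ t in (0:ℝ)..τ, (m t i - mδ t i)|
          ≤ ∫ t in (0:ℝ)..τ, |m t i - mδ t i| :=
            intervalIntegral.abs_integral_le_integral_abs hτ.le
        _ ≤ X := intervalIntegral.integral_mono_on hτ.le ((hmci i).sub (hmδci i)).abs
            hXint (fun t _ => by simpa using abs_apply_le_enorm3 (m t - mδ t) i)
    have hid : (relax θ i - relax θδ i) * D
        = ((N - Nδ) - (P - Pδ)) - relax θδ i * (D - Dδ) := by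
      linear_combination hkey i - hkeyδ i
    rw [hKdef, div_mul_eq_mul_div, le_div_iff₀ hcτ]
    have h1 : |relax θ i - relax θδ i| * cτ ≤ |relax θ i - relax θδ i| * |D| :=
      mul_le_mul_of_nonneg_left (hc i) (abs_nonneg _)
    have h2 : |(relax θ i - relax θδ i) * D| ≤ |N - Nδ| + |P - Pδ| + (1 / a) * |D - Dδ| := by
      rw [hid]
      have ha1 : |((N - Nδ) - (P - Pδ)) - relax θδ i * (D - Dδ)|
          ≤ |(N - Nδ) - (P - Pδ)| + |relax θδ i * (D - Dδ)| := abs_sub _ _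
      have ha2 : |(N - Nδ) - (P - Pδ)| ≤ |N - Nδ| + |P - Pδ| := abs_sub _ _
      have ha3 : |relax θδ i * (D - Dδ)| ≤ (1 / a) * |D - Dδ| := by
        rw [abs_mul, abs_of_nonneg (hrel i).1]
        exact mul_le_mul_of_nonneg_right (hrel i).2 (abs_nonneg _)
      linarith
    have h3 : (1 / a) * |D - Dδ| ≤ (1 / a) * X :=
      mul_le_mul_of_nonneg_left hDd (by positivity)
    have h4 : 0 ≤ 2 * |γ| * Bmax := mul_nonneg (by positivity) hBmax.le
    have h5 : 0 ≤ 2 * |γ| * Bmax * Y := mul_nonneg h4 hY0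
    have h6 : 0 ≤ (1 / a) * Y := mul_nonneg (by positivity) hY0
    rw [← abs_mul] at h1
    nlinarith [h1, h2, hNd, hPd, h3, h5, h6, hX0, hY0]
  have hrel2 : relax θ 2 = 1 / θ.1 := rfl
  have hrel2δ : relax θδ 2 = 1 / θδ.1 := rfl
  have hrel0 : relax θ 0 = 1 / θ.2 := rfl
  have hrel0δ : relax θδ 0 = 1 / θδ.2 := rfl
  have hb1 : |θ.1 - θδ.1| ≤ b ^ 2 * (K * (X + Y)) := by
    have h2 := main 2
    have e : θ.1 - θδ.1 = θ.1 * θδ.1 * (relax θδ 2 - relax θ 2) := by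
      rw [hrel2, hrel2δ]
      field_simp
    rw [e, abs_mul, abs_mul, abs_sub_comm]
    have hb1' : |θ.1| ≤ b := by rw [abs_of_pos hθ1pos]; exact hθ1.2
    have hb2' : |θδ.1| ≤ b := by rw [abs_of_pos hθδ1pos]; exact hθδ1.2
    calc |θ.1| * |θδ.1| * |relax θ 2 - relax θδ 2|
        ≤ b * b * (K * (X + Y)) :=
          mul_le_mul (mul_le_mul hb1' hb2' (abs_nonneg _) hb.le) h2 (abs_nonneg _)
            (by positivity)
      _ = b ^ 2 * (K * (X + Y)) := by ring
  have hb2 : |θ.2 - θδ.2| ≤ b ^ 2 * (K * (X + Y)) := by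
    have h2 := main 0
    have e : θ.2 - θδ.2 = θ.2 * θδ.2 * (relax θδ 0 - relax θ 0) := by
      rw [hrel0, hrel0δ]
      field_simp
    rw [e, abs_mul, abs_mul, abs_sub_comm]
    have hb1' : |θ.2| ≤ b := by rw [abs_of_pos hθ2pos]; exact hθ2.2
    have hb2' : |θδ.2| ≤ b := by rw [abs_of_pos hθδ2pos]; exact hθδ2.2
    calc |θ.2| * |θδ.2| * |relax θ 0 - relax θδ 0|
        ≤ b * b * (K * (X + Y)) :=
          mul_le_mul (mul_le_mul hb1' hb2' (abs_nonneg _) hb.le) h2 (abs_nonneg _)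
            (by positivity)
      _ = b ^ 2 * (K * (X + Y)) := by ring
  calc enorm2 (θ - θδ) ≤ |(θ - θδ).1| + |(θ - θδ).2| := enorm2_le_abs _
    _ = |θ.1 - θδ.1| + |θ.2 - θδ.2| := rfl
    _ ≤ b ^ 2 * (K * (X + Y)) + b ^ 2 * (K * (X + Y)) := add_le_add hb1 hb2
    _ = 2 * b ^ 2 * K * (X + Y) := by ring
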